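/- If a finite simple graph G is word-representable and u is an arbitrary vertex of G, then there exists a semi-transitive orientation of G in which u is a source (i.e., all edges incident to u are oriented away from u). -/

import Mathlib

/-- Letters `x` and `y` alternate in the word `w`: after deleting all letters other than
`x` and `y`, no two consecutive letters of the remaining word are equal. -/
def Alternate {V : Type*} [DecidableEq V] (w : List V) (x y : V) : Prop :=
  (w.filter (fun z => decide (z = x ∨ z = y))).Chain' (· ≠ ·)

/-- A simple graph `G` is word-representable if there is a word over its vertex set,
containing every vertex, such that two distinct letters alternate in the word
if and only if they are adjacent in `G`. -/
def WordRepresentable {V : Type*} [DecidableEq V] (G : SimpleGraph V) : Prop :=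
  ∃ w : List V, (∀ v : V, v ∈ w) ∧ ∀ x y : V, x ≠ y → (G.Adj x y ↔ Alternate w x y)

/-- `rel` is an orientation of the simple graph `G`: every arc lies on an edge of `G`,
and every edge of `G` is oriented in exactly one of the two directions. -/
def IsOrientation {V : Type*} (G : SimpleGraph V) (rel : V → V → Prop) : Prop :=
  (∀ x y, rel x y → G.Adj x y) ∧ (∀ x y, G.Adj x y → (rel x y ↔ ¬ rel y x))

/-- An orientation `rel` of `G` is semi-transitive: it is acyclic, and for every directed
path `p 0 → p 1 → ⋯ → p k`, either the endpoints are non-adjacent in `G`, or there is an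
arc `p i → p j` for all `i < j`. -/
def IsSemiTransitive {V : Type*} (G : SimpleGraph V) (rel : V → V → Prop) : Prop :=
  (∀ v, ¬ Relation.TransGen rel v v) ∧
  ∀ (k : ℕ) (p : Fin (k + 1) → V),
    (∀ i : Fin k, rel (p i.castSucc) (p i.succ)) →
    (¬ G.Adj (p 0) (p (Fin.last k)) ∨ ∀ i j : Fin (k + 1), i < j → rel (p i) (p j))

/-- `v` is obtained from `u` by deleting the first letter and appending a letter at the end:
`v i = u (i+1)` for all `i < n - 1`. -/
def debruijnShift (n k : ℕ) (u v : Fin n → Fin k) : Prop :=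
  ∀ (i : ℕ) (h : i + 1 < n), v ⟨i, Nat.lt_of_succ_lt h⟩ = u ⟨i + 1, h⟩

/-- The simplified de Bruijn graph `S(n,k)`: vertices are words of length `n` over a
`k`-letter alphabet; distinct words are adjacent if one is obtained from the other by
deleting the first letter and appending a letter at the end. -/
def simplifiedDeBruijn (n k : ℕ) : SimpleGraph (Fin n → Fin k) :=
  SimpleGraph.fromRel (debruijnShift n k)


set_option linter.unusedSectionVars false

open List

namespace WRAux

variable {V : Type*} [DecidableEq V]

/-- alternating word `x y x y ⋯` of length `n` -/
def altL (x y : V) : ℕ → List V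
  | 0 => []
  | n+1 => x :: altL y x n

@[simp] lemma altL_zero (x y : V) : altL x y 0 = [] := rfl
@[simp] lemma altL_one (x y : V) : altL x y 1 = [x] := rfl
lemma altL_succ (x y : V) (n : ℕ) : altL x y (n+1) = x :: altL y x n := rfl
lemma altL_two (x y : V) : altL x y 2 = [x, y] := rfl
lemma altL_three (x y : V) : altL x y 3 = [x, y, x] := rfl
lemma altL_succ_succ (x y : V) (n : ℕ) : altL x y (n+2) = x :: y :: altL x y n := rfl

lemma length_altL (x y : V) : ∀ n, (altL x y n).length = n
  | 0 => rfl
  | n+1 => by rw [altL_succ, length_cons, length_altL y x n]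

lemma chain'_altL (x y : V) (h : x ≠ y) : ∀ n, Chain' (· ≠ ·) (altL x y n)
  | 0 => isChain_nil
  | 1 => isChain_singleton x
  | (n+2) => by
      rw [altL_succ_succ]
      exact isChain_cons_cons.mpr ⟨h, (altL_succ y x n) ▸ chain'_altL y x h.symm (n+1)⟩

lemma mem_altL (x y z : V) : ∀ n, z ∈ altL x y n → z = x ∨ z = y
  | 0, h => absurd h not_mem_nil
  | n+1, h => by
      rw [altL_succ, mem_cons] at h
      rcases h with h | h
      · exact Or.inl h
      · exact (mem_altL y x z n h).symm

lemma count_altL (x y : V) (h : x ≠ y) :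
    ∀ n, count x (altL x y n) = (n+1)/2 ∧ count y (altL x y n) = n/2
  | 0 => by simp
  | 1 => by simp [count_cons, h, h.symm]
  | n+2 => by
      obtain ⟨h1, h2⟩ := count_altL x y h n
      rw [altL_succ_succ]
      simp only [count_cons, h1, h2, beq_iff_eq, h, h.symm, if_true, if_false, beq_self_eq_true]
      constructor <;> omega

lemma take_altL : ∀ (m n : ℕ) (x y : V), (altL x y n).take m = altL x y (min m n)
  | 0, n, x, y => by simp
  | m+1, 0, x, y => by simp
  | m+1, n+1, x, y => by
      rw [altL_succ, take_succ_cons, take_altL m n y x, Nat.succ_min_succ, altL_succ]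

lemma drop_altL : ∀ (m n : ℕ) (x y : V),
    (altL x y n).drop m = if m % 2 = 0 then altL x y (n - m) else altL y x (n - m)
  | 0, n, x, y => by simp
  | m+1, 0, x, y => by simp
  | m+1, n+1, x, y => by
      rw [altL_succ, drop_succ_cons, drop_altL m n y x, Nat.succ_sub_succ]
      rcases Nat.mod_two_eq_zero_or_one m with hm | hm
      · have h2 : (m+1) % 2 = 1 := by omega
        simp [hm, h2]
      · have h2 : (m+1) % 2 = 0 := by omega
        simp [hm, h2]

lemma getLast?_altL : ∀ (n : ℕ) (x y : V),
    (altL x y (n+1)).getLast? = some (if n % 2 = 0 then x else y)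
  | 0, x, y => by simp
  | n+1, x, y => by
      have : altL x y (n+2) = x :: altL y x (n+1) := rfl
      rw [this, altL_succ y x n, getLast?_cons_cons, ← altL_succ y x n,
        getLast?_altL n y x]
      rcases Nat.mod_two_eq_zero_or_one n with hn | hn
      · have h2 : (n+1) % 2 = 1 := by omega
        simp [hn, h2]
      · have h2 : (n+1) % 2 = 0 := by omega
        simp [hn, h2]

lemma head_altL_mem (x y : V) (n : ℕ) (hn : 1 ≤ n) : (altL x y n).head? = some x := by
  cases n with
  | zero => omega
  | succ m => rw [altL_succ]; rfl

lemma dedup_altL (x y : V) (h : x ≠ y) :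
    ∀ n, (altL x y (n+2)).dedup = if n % 2 = 0 then [x, y] else [y, x]
  | 0 => by
      rw [altL_two, dedup_cons_of_notMem (by simp [h]), dedup_cons_of_notMem (by simp)]
      simp
  | 1 => by
      rw [altL_three, dedup_cons_of_mem (by simp), dedup_cons_of_notMem (by simp [h.symm]),
        dedup_cons_of_notMem (by simp)]
      simp
  | n+2 => by
      have e1 : altL x y (n+4) = x :: y :: altL x y (n+2) := rfl
      have hx : x ∈ altL x y (n+2) := by rw [altL_succ_succ]; exact mem_cons_self
      have hy : y ∈ altL x y (n+2) := by rw [altL_succ_succ]; exact mem_cons_of_mem _ mem_cons_self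
      rw [e1, dedup_cons_of_mem (mem_cons_of_mem _ hx), dedup_cons_of_mem hy,
        dedup_altL x y h n]
      have : (n+2) % 2 = n % 2 := by omega
      rw [this]

lemma altL_append_one (x y : V) (L : ℕ) :
    altL x y (L+1) = altL x y L ++ [if L % 2 = 0 then x else y] := by
  conv_lhs => rw [← take_append_drop L (altL x y (L+1))]
  rw [take_altL, drop_altL, Nat.min_eq_left (Nat.le_succ L)]
  have : L + 1 - L = 1 := by omega
  rw [this]
  rcases Nat.mod_two_eq_zero_or_one L with hL | hL <;> simp [hL]

lemma altL_append_two (x y : V) (L : ℕ) :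
    altL x y (L+2) = altL x y L ++ (if L % 2 = 0 then [x, y] else [y, x]) := by
  conv_lhs => rw [← take_append_drop L (altL x y (L+2))]
  rw [take_altL, drop_altL, Nat.min_eq_left (by omega)]
  have : L + 2 - L = 2 := by omega
  rw [this]
  rcases Nat.mod_two_eq_zero_or_one L with hL | hL <;> simp [hL, altL_two]

lemma alt_class : ∀ (s : List V) (x y : V), x ≠ y → (∀ z ∈ s, z = x ∨ z = y) →
    Chain' (· ≠ ·) s → s = altL x y s.length ∨ s = altL y x s.length
  | [], x, y, _, _, _ => Or.inl rfl
  | a :: t, x, y, hxy, hm, hc => by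
      have ht : Chain' (· ≠ ·) t := hc.tail
      have hmt : ∀ z ∈ t, z = x ∨ z = y := fun z hz => hm z (mem_cons_of_mem a hz)
      rcases hm a mem_cons_self with ha | ha
      · subst ha
        rcases alt_class t y a hxy.symm (fun z hz => (hmt z hz).symm) ht with h | h
        · left
          rw [length_cons, altL_succ]
          exact congrArg _ h
        · cases t with
          | nil => left; rfl
          | cons b t' =>
              exfalso
              have hb : b = a := by
                have : b :: t' = a :: altL y a t'.length := by
                  rw [h, length_cons, altL_succ]
                exact (List.cons.injEq .. ▸ this : _ ∧ _).1
              exact (isChain_cons_cons.mp hc).1 hb.symm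
      · subst ha
        rcases alt_class t x a hxy (fun z hz => hmt z hz) ht with h | h
        · right
          rw [length_cons, altL_succ]
          exact congrArg _ h
        · cases t with
          | nil => right; rfl
          | cons b t' =>
              exfalso
              have hb : b = a := by
                have : b :: t' = a :: altL x a t'.length := by
                  rw [h, length_cons, altL_succ]
                exact (List.cons.injEq .. ▸ this : _ ∧ _).1
              exact (isChain_cons_cons.mp hc).1 hb.symm


/-- the key prefix-count domination property -/
def Cc (x y : V) (w : List V) : Prop :=
  ∀ n, count y (w.take n) ≤ count x (w.take n) ∧
    count x (w.take n) ≤ count y (w.take n) + 1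

def pxy (x y : V) : V → Bool := fun z => decide (z = x ∨ z = y)

lemma alternate_iff (w : List V) (x y : V) :
    Alternate w x y ↔ Chain' (· ≠ ·) (w.filter (pxy x y)) := Iff.rfl

lemma filter_pxy_symm (x y : V) (w : List V) :
    w.filter (pxy x y) = w.filter (pxy y x) :=
  filter_congr (by intro a _; simp [pxy, or_comm])

lemma mem_of_mem_filter_pxy {x y z : V} {w : List V} (h : z ∈ w.filter (pxy x y)) :
    z = x ∨ z = y := by
  have h2 : pxy x y z = true := of_mem_filter h
  exact of_decide_eq_true h2

lemma count_filter_pxy_left (x y : V) (l : List V) :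
    count x (l.filter (pxy x y)) = count x l :=
  count_filter (by simp [pxy])

lemma count_filter_pxy_right (x y : V) (l : List V) :
    count y (l.filter (pxy x y)) = count y l :=
  count_filter (by simp [pxy])

lemma exists_take_filter (q : V → Bool) :
    ∀ (w : List V) (m : ℕ), ∃ n, (w.take n).filter q = (w.filter q).take m
  | [], m => ⟨0, by simp⟩
  | a :: t, 0 => ⟨0, by simp⟩
  | a :: t, m+1 => by
      by_cases hq : q a
      · obtain ⟨n, hn⟩ := exists_take_filter q t m
        exact ⟨n+1, by rw [take_succ_cons, filter_cons_of_pos hq, filter_cons_of_pos hq,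
          take_succ_cons, hn]⟩
      · obtain ⟨n, hn⟩ := exists_take_filter q t (m+1)
        exact ⟨n+1, by rw [take_succ_cons, filter_cons_of_neg hq, filter_cons_of_neg hq, hn]⟩

lemma exists_filter_take (q : V → Bool) (w : List V) (n : ℕ) :
    ∃ m, (w.take n).filter q = (w.filter q).take m :=
  ⟨((w.take n).filter q).length,
    prefix_iff_eq_take.mp ((take_prefix n w).filter q)⟩

lemma cc_iff_filter (x y : V) (w : List V) :
    Cc x y w ↔ Cc x y (w.filter (pxy x y)) := by
  constructor
  · intro h m
    obtain ⟨n, hn⟩ := exists_take_filter (pxy x y) w m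
    rw [← hn, count_filter_pxy_left, count_filter_pxy_right]
    exact h n
  · intro h n
    obtain ⟨m, hm⟩ := exists_filter_take (pxy x y) w n
    have cx := count_filter_pxy_left x y (w.take n)
    have cy := count_filter_pxy_right x y (w.take n)
    rw [← cx, ← cy, hm]
    exact h m

lemma cc_altL (x y : V) (h : x ≠ y) (L : ℕ) : Cc x y (altL x y L) := by
  intro n
  rw [take_altL]
  obtain ⟨c1, c2⟩ := count_altL x y h (min n L)
  rw [c1, c2]
  constructor <;> omega

lemma cc_to_altL : ∀ (s : List V) (x y : V), x ≠ y → (∀ z ∈ s, z = x ∨ z = y) →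
    Cc x y s → s = altL x y s.length
  | [], x, y, _, _, _ => rfl
  | a :: t, x, y, hxy, hm, h => by
      have ha : a = x := by
        rcases hm a mem_cons_self with ha | ha
        · exact ha
        · exfalso
          subst ha
          have h1 := (h 1).1
          simp [count_cons, hxy, hxy.symm] at h1
      subst a
      have ht : Cc y x t := by
        intro n
        have h2 := h (n+1)
        rw [take_succ_cons, count_cons, count_cons] at h2
        simp only [beq_self_eq_true, if_true, beq_iff_eq, hxy, hxy.symm, if_false] at h2
        obtain ⟨c1, c2⟩ := h2
        constructor <;> omega
      have := cc_to_altL t y x hxy.symm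
        (fun z hz => (hm z (mem_cons_of_mem x hz)).symm) ht
      rw [length_cons, altL_succ]
      exact congrArg _ this

lemma cc_to_alternate {x y : V} {w : List V} (hxy : x ≠ y) (h : Cc x y w) :
    Alternate w x y := by
  rw [alternate_iff]
  have h2 := (cc_iff_filter x y w).mp h
  have := cc_to_altL (w.filter (pxy x y)) x y hxy
    (fun z hz => mem_of_mem_filter_pxy hz) h2
  rw [this]
  exact chain'_altL x y hxy _

lemma alternate_to_cc {x y : V} {w : List V} (hxy : x ≠ y) (h : Alternate w x y) :
    Cc x y w ∨ Cc y x w := by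
  rw [alternate_iff] at h
  rcases alt_class (w.filter (pxy x y)) x y hxy
    (fun z hz => mem_of_mem_filter_pxy hz) h with h1 | h1
  · left
    rw [cc_iff_filter]
    rw [h1]
    exact cc_altL x y hxy _
  · right
    rw [cc_iff_filter, ← filter_pxy_symm]
    rw [h1]
    exact cc_altL y x hxy.symm _

lemma cc_not_both {x y : V} {w : List V} (hx : x ∈ w) (hxy : x ≠ y) :
    ¬ (Cc x y w ∧ Cc y x w) := by
  rintro ⟨h1, h2⟩
  set s := w.filter (pxy x y) with hs
  have hxs : x ∈ s := mem_filter.mpr ⟨hx, by simp [pxy]⟩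
  have e1 : s = altL x y s.length :=
    cc_to_altL s x y hxy (fun z hz => mem_of_mem_filter_pxy hz)
      ((cc_iff_filter x y w).mp h1)
  have e2 : s = altL y x s.length := by
    have := (cc_iff_filter y x w).mp h2
    rw [← filter_pxy_symm] at this
    exact cc_to_altL s y x hxy.symm
      (fun z hz => (mem_of_mem_filter_pxy hz).symm) this
  cases hse : s with
  | nil => rw [hse] at hxs; exact absurd hxs not_mem_nil
  | cons b t =>
      have hb1 : b = x := by
        have := e1; rw [hse, length_cons, altL_succ] at this
        exact (List.cons.injEq .. ▸ this : _ ∧ _).1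
      have hb2 : b = y := by
        have := e2; rw [hse, length_cons, altL_succ] at this
        exact (List.cons.injEq .. ▸ this : _ ∧ _).1
      exact hxy (hb1 ▸ hb2)

lemma cc_strict {x y : V} {w : List V} (hx : x ∈ w) (hxy : x ≠ y) (h : Cc x y w) :
    ∃ n, count y (w.take n) < count x (w.take n) := by
  by_contra hcon
  push_neg at hcon
  have h2 : Cc y x w := fun n => ⟨hcon n, le_trans (h n).1 (Nat.le_succ _)⟩
  exact cc_not_both hx hxy ⟨h, h2⟩


lemma rotate_core {a b : V} (hab : a ≠ b) {fP fQ : List V}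
    (h1 : fP ++ fQ = altL a b (fP ++ fQ).length)
    (heven : (fP ++ fQ).length % 2 = 0) :
    Chain' (· ≠ ·) (fQ ++ fP) := by
  rcases eq_or_ne fQ [] with hQ | hQ
  · subst hQ
    rw [nil_append]
    rw [append_nil] at h1
    rw [h1]; exact chain'_altL a b hab _
  rcases eq_or_ne fP [] with hP | hP
  · subst hP
    rw [append_nil]
    rw [nil_append] at h1
    rw [h1]; exact chain'_altL a b hab _
  set L := (fP ++ fQ).length with hL
  set m := fP.length with hm
  have hfP : fP = altL a b m := by
    have := take_left (l₁ := fP) (l₂ := fQ)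
    rw [h1] at this
    rw [← this, take_altL]
    congr 1
    have : m ≤ L := by rw [hL, length_append]; omega
    omega
  have hfQ : fQ = (altL a b L).drop m := by rw [← h1, drop_left]
  have hm1 : 1 ≤ m := by
    rcases fP with _ | ⟨c, t⟩
    · exact absurd rfl hP
    · simp [hm]
  have hL1 : m < L := by
    have h9 : 1 ≤ fQ.length := by
      rcases fQ with _ | ⟨c, t⟩
      · exact absurd rfl hQ
      · simp
    rw [hL, length_append, ← hm]
    omega
  -- last element of fQ is b
  have hlast : fQ.getLast? = some b := by
    have e1 : (fP ++ fQ).getLast? = fQ.getLast?.or fP.getLast? := getLast?_append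
    have e2 : (fP ++ fQ).getLast? = some b := by
      rw [h1]
      have : L = (L - 1) + 1 := by omega
      rw [this, getLast?_altL]
      have : (L - 1) % 2 = 1 := by omega
      simp [this]
    obtain ⟨z, hz⟩ : ∃ z, fQ.getLast? = some z := by
      rcases fQ with _ | ⟨c, t⟩
      · exact absurd rfl hQ
      · exact ⟨(c :: t).getLast (by simp), getLast?_eq_getLast _⟩
    rw [hz]
    rw [e2, hz] at e1
    simpa using e1.symm
  have hhead : fP.head? = some a := by rw [hfP]; exact head_altL_mem a b m hm1
  have hcQ : Chain' (· ≠ ·) fQ := by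
    rw [hfQ, drop_altL]
    rcases Nat.mod_two_eq_zero_or_one m with h2 | h2
    · simp [h2]; exact chain'_altL a b hab _
    · simp [h2]; exact chain'_altL b a hab.symm _
  have hcP : Chain' (· ≠ ·) fP := by rw [hfP]; exact chain'_altL a b hab _
  refine hcQ.append hcP ?_
  intro z hz w hw
  rw [hlast] at hz
  rw [hhead] at hw
  have hz' : b = z := by simpa using hz
  have hw' : a = w := by simpa using hw
  rw [← hz', ← hw']
  exact hab.symm

lemma alternate_rotate {x y : V} (hxy : x ≠ y) (P Q : List V)
    (hc : count x (P ++ Q) = count y (P ++ Q))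
    (h : Alternate (P ++ Q) x y) : Alternate (Q ++ P) x y := by
  rw [alternate_iff, filter_append] at h ⊢
  set fP := P.filter (pxy x y) with hP
  set fQ := Q.filter (pxy x y) with hQ
  have hcount : count x (fP ++ fQ) = count y (fP ++ fQ) := by
    have e : fP ++ fQ = (P ++ Q).filter (pxy x y) := (filter_append ..).symm
    rw [e, count_filter_pxy_left, count_filter_pxy_right, hc]
  have hmem : ∀ z ∈ fP ++ fQ, z = x ∨ z = y := by
    intro z hz
    rcases mem_append.mp hz with h' | h'
    · exact mem_of_mem_filter_pxy h'
    · exact mem_of_mem_filter_pxy h'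
  rcases alt_class (fP ++ fQ) x y hxy hmem h with h1 | h1
  · have heven : (fP ++ fQ).length % 2 = 0 := by
      obtain ⟨c1, c2⟩ := count_altL x y hxy (fP ++ fQ).length
      rw [h1, c1, c2] at hcount; omega
    exact rotate_core hxy h1 heven
  · have heven : (fP ++ fQ).length % 2 = 0 := by
      obtain ⟨c1, c2⟩ := count_altL y x hxy.symm (fP ++ fQ).length
      rw [h1, c2, c1] at hcount; omega
    exact rotate_core hxy.symm h1 heven

lemma dedup_filter (p : V → Bool) : ∀ (l : List V), (l.dedup).filter p = (l.filter p).dedup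
  | [] => rfl
  | a :: t => by
      by_cases pa : p a
      · by_cases ha : a ∈ t
        · rw [dedup_cons_of_mem ha, filter_cons_of_pos pa,
            dedup_cons_of_mem (mem_filter.mpr ⟨ha, pa⟩)]
          exact dedup_filter p t
        · rw [dedup_cons_of_notMem ha, filter_cons_of_pos pa, filter_cons_of_pos pa,
            dedup_cons_of_notMem (fun hc => ha (mem_filter.mp hc).1)]
          rw [dedup_filter p t]
      · by_cases ha : a ∈ t
        · rw [dedup_cons_of_mem ha, filter_cons_of_neg pa]
          exact dedup_filter p t
        · rw [dedup_cons_of_notMem ha, filter_cons_of_neg pa, filter_cons_of_neg pa]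
          exact dedup_filter p t

lemma filter_eq_single {l : List V} {x : V} (hx : x ∈ l) :
    (l.dedup).filter (fun z => decide (z = x)) = [x] := by
  rw [List.filter_eq, count_dedup]
  simp [hx]


lemma alternate_symm {w : List V} {x y : V} :
    Alternate w x y ↔ Alternate w y x := by
  rw [alternate_iff, alternate_iff, filter_pxy_symm]

lemma step_both {w : List V} {m : ℕ} (hall : ∀ v : V, v ∈ w)
    {x y : V} (hxy : x ≠ y) (hx : count x w = m) (hy : count y w = m)
    (h : Alternate w x y) :
    Alternate (w ++ (w.dedup).filter (fun v => decide (count v w = m))) x y := by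
  set q : V → Bool := fun v => decide (count v w = m) with hq
  rw [alternate_iff] at h ⊢
  rw [filter_append]
  set s := w.filter (pxy x y) with hs
  have hfiltπ : ((w.dedup).filter q).filter (pxy x y) = s.dedup := by
    rw [filter_filter]
    have e1 : (w.dedup).filter (fun a => pxy x y a && q a) = (w.dedup).filter (pxy x y) := by
      apply filter_congr
      intro a _
      by_cases hpa : pxy x y a = true
      · rcases of_decide_eq_true hpa with rfl | rfl
        · simp [hpa, hq, hx]
        · simp [hpa, hq, hy]
      · simp only [Bool.not_eq_true] at hpa
        rw [hpa, Bool.false_and]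
    rw [e1, hs, dedup_filter]
  rw [hfiltπ]
  have hmem : ∀ z ∈ s, z = x ∨ z = y := fun z hz => mem_of_mem_filter_pxy hz
  have hcx : 1 ≤ count x s := by
    rw [hs, count_filter_pxy_left]
    exact count_pos_iff.mpr (hall x)
  have hcy : 1 ≤ count y s := by
    rw [hs, count_filter_pxy_right]
    exact count_pos_iff.mpr (hall y)
  rcases alt_class s x y hxy hmem h with h1 | h1
  · set L := s.length with hL
    obtain ⟨c1, c2⟩ := count_altL x y hxy L
    rw [h1, c1] at hcx
    rw [h1, c2] at hcy
    have hL2 : 2 ≤ L := by omega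
    have e : s.dedup = if L % 2 = 0 then [x, y] else [y, x] := by
      have h3 := dedup_altL x y hxy (L - 2)
      have h4 : L - 2 + 2 = L := by omega
      have h5 : (L - 2) % 2 = L % 2 := by omega
      rw [h4, h5] at h3
      rw [h1]
      exact h3
    rw [e]
    rw [h1]
    rw [← altL_append_two x y L]
    exact chain'_altL x y hxy _
  · set L := s.length with hL
    obtain ⟨c1, c2⟩ := count_altL y x hxy.symm L
    rw [h1, c2] at hcx
    rw [h1, c1] at hcy
    have hL2 : 2 ≤ L := by omega
    have e : s.dedup = if L % 2 = 0 then [y, x] else [x, y] := by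
      have h3 := dedup_altL y x hxy.symm (L - 2)
      have h4 : L - 2 + 2 = L := by omega
      have h5 : (L - 2) % 2 = L % 2 := by omega
      rw [h4, h5] at h3
      rw [h1]
      exact h3
    rw [e]
    rw [h1]
    rw [← altL_append_two y x L]
    exact chain'_altL y x hxy.symm _

lemma step_one {w : List V} {m : ℕ} (hall : ∀ v : V, v ∈ w)
    (hmlow : ∀ v : V, m ≤ count v w)
    {x y : V} (hxy : x ≠ y) (hx : count x w = m) (hy : count y w ≠ m)
    (h : Alternate w x y) :
    Alternate (w ++ (w.dedup).filter (fun v => decide (count v w = m))) x y := by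
  set q : V → Bool := fun v => decide (count v w = m) with hq
  rw [alternate_iff] at h ⊢
  rw [filter_append]
  set s := w.filter (pxy x y) with hs
  have hfiltπ : ((w.dedup).filter q).filter (pxy x y) = [x] := by
    rw [filter_filter]
    have e1 : (w.dedup).filter (fun a => pxy x y a && q a)
        = (w.dedup).filter (fun z => decide (z = x)) := by
      apply filter_congr
      intro a _
      by_cases hax : a = x
      · subst hax
        simp [pxy, hq, hx]
      · by_cases hay : a = y
        · subst hay
          simp [pxy, hq, hy, hax]
        · simp [pxy, hax, hay]
    rw [e1, filter_eq_single (hall x)]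
  rw [hfiltπ]
  have hmem : ∀ z ∈ s, z = x ∨ z = y := fun z hz => mem_of_mem_filter_pxy hz
  have hcx : count x s = m := by rw [hs, count_filter_pxy_left, hx]
  have hcy : m < count y s := by
    rw [hs, count_filter_pxy_right]
    exact lt_of_le_of_ne (hmlow y) (Ne.symm hy)
  rcases alt_class s x y hxy hmem h with h1 | h1
  · exfalso
    set L := s.length with hL
    obtain ⟨c1, c2⟩ := count_altL x y hxy L
    rw [h1, c1] at hcx
    rw [h1, c2] at hcy
    omega
  · set L := s.length with hL
    obtain ⟨c1, c2⟩ := count_altL y x hxy.symm L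
    rw [h1, c2] at hcx
    rw [h1, c1] at hcy
    have hodd : ¬ (L % 2 = 0) := by omega
    have e := altL_append_one y x L
    rw [if_neg hodd] at e
    rw [h1]
    rw [← e]
    exact chain'_altL y x hxy.symm _

lemma step_none {w : List V} {m : ℕ} {x y : V}
    (hx : count x w ≠ m) (hy : count y w ≠ m) :
    (w ++ (w.dedup).filter (fun v => decide (count v w = m))).filter (pxy x y)
      = w.filter (pxy x y) := by
  rw [filter_append]
  have e : ((w.dedup).filter (fun v => decide (count v w = m))).filter (pxy x y) = [] := by
    rw [filter_eq_nil_iff]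
    intro a ha hpa
    have ham : count a w = m := by
      have h9 := of_mem_filter ha
      simpa using h9
    rcases of_decide_eq_true hpa with rfl | rfl
    · exact hx ham
    · exact hy ham
  rw [e, append_nil]

lemma step_iff {w : List V} {m : ℕ} (hall : ∀ v : V, v ∈ w)
    (hmlow : ∀ v : V, m ≤ count v w) {x y : V} (hxy : x ≠ y) :
    (Alternate w x y ↔
      Alternate (w ++ (w.dedup).filter (fun v => decide (count v w = m))) x y) := by
  constructor
  · intro h
    by_cases hx : count x w = m <;> by_cases hy : count y w = m
    · exact step_both hall hxy hx hy h
    · exact step_one hall hmlow hxy hx hy h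
    · rw [alternate_symm] at h ⊢
      exact step_one hall hmlow hxy.symm hy hx h
    · rw [alternate_iff] at h ⊢
      rw [step_none hx hy]
      exact h
  · intro h
    rw [alternate_iff] at h ⊢
    rw [filter_append] at h
    exact h.prefix (prefix_append _ _)

lemma step_count {w : List V} {m : ℕ} (hall : ∀ v : V, v ∈ w) (v : V) :
    count v (w ++ (w.dedup).filter (fun z => decide (count z w = m))) =
      count v w + (if count v w = m then 1 else 0) := by
  rw [count_append]
  congr 1
  by_cases hv : count v w = m
  · rw [if_pos hv, count_filter (by simp [hv]), count_dedup, if_pos (hall v)]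
  · rw [if_neg hv, count_eq_zero]
    intro hmem
    have h9 := of_mem_filter hmem
    simp at h9
    exact hv h9


lemma unif {V : Type*} [DecidableEq V] [Fintype V] (G : SimpleGraph V)
    (hne : (Finset.univ : Finset V).Nonempty) :
    ∀ (d : ℕ) (w : List V), (∀ v, v ∈ w) →
      (∀ x y : V, x ≠ y → (G.Adj x y ↔ Alternate w x y)) →
      (Finset.univ.sup (fun v => count v w) ≤ Finset.univ.inf' hne (fun v => count v w) + d) →
      ∃ w' : List V, (∀ v, v ∈ w') ∧
        (∀ x y : V, x ≠ y → (G.Adj x y ↔ Alternate w' x y)) ∧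
        (∀ v v' : V, count v w' = count v' w') := by
  intro d
  induction d with
  | zero =>
      intro w hall hrep hbound
      refine ⟨w, hall, hrep, fun v v' => ?_⟩
      have key : ∀ a b : V, count a w ≤ count b w := by
        intro a b
        calc count a w ≤ Finset.univ.sup (fun v => count v w) :=
              Finset.le_sup (f := fun v => count v w) (Finset.mem_univ a)
          _ ≤ Finset.univ.inf' hne (fun v => count v w) + 0 := hbound
          _ ≤ count b w := by rw [Nat.add_zero]; exact Finset.inf'_le (fun v => count v w) (Finset.mem_univ b)
      exact le_antisymm (key v v') (key v' v)
  | succ d ih =>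
      intro w hall hrep hbound
      set m := Finset.univ.inf' hne (fun v => count v w) with hm
      by_cases hle : Finset.univ.sup (fun v => count v w) ≤ m
      · refine ⟨w, hall, hrep, fun v v' => ?_⟩
        have key : ∀ a b : V, count a w ≤ count b w := by
          intro a b
          calc count a w ≤ Finset.univ.sup (fun v => count v w) :=
                Finset.le_sup (f := fun v => count v w) (Finset.mem_univ a)
            _ ≤ m := hle
            _ ≤ count b w := Finset.inf'_le (fun v => count v w) (Finset.mem_univ b)
        exact le_antisymm (key v v') (key v' v)
      · set w' := w ++ (w.dedup).filter (fun v => decide (count v w = m)) with hw'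
        have hmlow : ∀ v : V, m ≤ count v w :=
          fun v => Finset.inf'_le (fun v => count v w) (Finset.mem_univ v)
        have hall' : ∀ v : V, v ∈ w' := fun v => mem_append_left _ (hall v)
        have hrep' : ∀ x y : V, x ≠ y → (G.Adj x y ↔ Alternate w' x y) :=
          fun x y hxy => (hrep x y hxy).trans (step_iff hall hmlow hxy)
        have hcnt' : ∀ v : V, count v w' = count v w + (if count v w = m then 1 else 0) :=
          fun v => step_count hall v
        have hinf' : m + 1 ≤ Finset.univ.inf' hne (fun v => count v w') := by
          apply Finset.le_inf'
          intro b _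
          rw [hcnt' b]
          by_cases hb : count b w = m
          · rw [if_pos hb, hb]
          · rw [if_neg hb]
            have := hmlow b
            omega
        have hsup' : Finset.univ.sup (fun v => count v w') ≤
            Finset.univ.inf' hne (fun v => count v w') + d := by
          apply Finset.sup_le
          intro b _
          rw [hcnt' b]
          by_cases hb : count b w = m
          · rw [if_pos hb, hb]
            omega
          · rw [if_neg hb]
            have h1 : count b w ≤ Finset.univ.sup (fun v => count v w) :=
              Finset.le_sup (f := fun v => count v w) (Finset.mem_univ b)
            omega
        exact ih w' hall' hrep' hsup'

lemma exists_good_word {V : Type*} [DecidableEq V] [Fintype V] (G : SimpleGraph V)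
    (h : WordRepresentable G) (u : V) :
    ∃ w : List V, (∀ v, v ∈ w) ∧ (∀ x y : V, x ≠ y → (G.Adj x y ↔ Alternate w x y)) ∧
      (∃ t, w = u :: t) := by
  obtain ⟨w0, hall0, hrep0⟩ := h
  have hne : (Finset.univ : Finset V).Nonempty := ⟨u, Finset.mem_univ u⟩
  obtain ⟨w1, hall1, hrep1, hcnt⟩ := unif G hne
    (Finset.univ.sup (fun v => count v w0)) w0 hall0 hrep0 (Nat.le_add_left _ _)
  obtain ⟨A, B, hAB⟩ := append_of_mem (hall1 u)
  refine ⟨u :: (B ++ A), ?_, ?_, ⟨B ++ A, rfl⟩⟩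
  · intro v
    have hv := hall1 v
    rw [hAB] at hv
    simp only [mem_append, mem_cons] at hv ⊢
    tauto
  · intro x y hxy
    rw [hrep1 x y hxy]
    have hform : u :: (B ++ A) = (u :: B) ++ A := by simp
    have hc1 : count x (A ++ u :: B) = count y (A ++ u :: B) := by
      rw [← hAB]; exact hcnt x y
    have hc2 : count x ((u :: B) ++ A) = count y ((u :: B) ++ A) := by
      rw [count_append, count_append] at hc1 ⊢
      omega
    constructor
    · intro h1
      rw [hform]
      rw [hAB] at h1
      exact alternate_rotate hxy A (u :: B) hc1 h1
    · intro h1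
      rw [hform] at h1
      have h2 := alternate_rotate hxy (u :: B) A hc2 h1
      rw [← hAB] at h2
      exact h2


end WRAux

open WRAux

/-- If a finite simple graph `G` is word-representable and `u` is an arbitrary vertex,
then `G` admits a semi-transitive orientation in which `u` is a source. -/
theorem exists_semiTransitive_orientation_with_source {V : Type*} [Fintype V]
    [DecidableEq V] (G : SimpleGraph V) (h : WordRepresentable G) (u : V) :
    ∃ rel : V → V → Prop, IsOrientation G rel ∧ IsSemiTransitive G rel ∧
      ∀ v : V, G.Adj u v → rel u v := by
  obtain ⟨w, hall, hrep, t, hw⟩ := exists_good_word G h u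
  have hccAdj : ∀ {x y : V}, G.Adj x y → Cc x y w ∨ Cc y x w := by
    intro x y hxy
    exact alternate_to_cc hxy.ne ((hrep x y hxy.ne).mp hxy)
  have hnb : ∀ {x y : V}, x ≠ y → ¬(Cc x y w ∧ Cc y x w) :=
    fun {x y} hxy => cc_not_both (hall x) hxy
  have hstrict : ∀ {x y : V}, x ≠ y → Cc x y w →
      ∃ n, count y (w.take n) < count x (w.take n) :=
    fun {x y} hxy hc => cc_strict (hall x) hxy hc
  refine ⟨fun x y => G.Adj x y ∧ Cc x y w, ⟨fun x y hxy => hxy.1, ?_⟩, ⟨?_, ?_⟩, ?_⟩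
  · -- orientation: exactly one direction
    intro x y hadj
    constructor
    · rintro ⟨_, hcxy⟩ ⟨_, hcyx⟩
      exact hnb hadj.ne ⟨hcxy, hcyx⟩
    · intro hn
      refine ⟨hadj, ?_⟩
      rcases hccAdj hadj with hc | hc
      · exact hc
      · exact absurd ⟨hadj.symm, hc⟩ hn
  · -- acyclicity
    intro v hv
    have key : ∀ a b : V, Relation.TransGen (fun x y => G.Adj x y ∧ Cc x y w) a b →
        (∀ n, count b (w.take n) ≤ count a (w.take n)) ∧
        (∃ n, count b (w.take n) < count a (w.take n)) := by
      intro a b hab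
      induction hab with
      | single h' => exact ⟨fun n => (h'.2 n).1, hstrict h'.1.ne h'.2⟩
      | tail hab h' ih =>
          obtain ⟨ih1, n0, ih2⟩ := ih
          refine ⟨fun n => le_trans (h'.2 n).1 (ih1 n), ?_⟩
          obtain ⟨n1, hn1⟩ := hstrict h'.1.ne h'.2
          exact ⟨n1, lt_of_lt_of_le hn1 (ih1 n1)⟩
    obtain ⟨_, n, hn⟩ := key v v hv
    exact lt_irrefl _ hn
  · -- semi-transitivity
    intro k p hp
    rcases Nat.eq_zero_or_pos k with hk | hk
    · subst hk
      left
      have : Fin.last 0 = (0 : Fin 1) := rfl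
      rw [this]
      exact G.loopless.irrefl (p 0)
    by_cases hAdj : G.Adj (p 0) (p (Fin.last k))
    swap
    · exact Or.inl hAdj
    right
    have hp' : ∀ j : ℕ, (hj : j < k) → G.Adj (p ⟨j, by omega⟩) (p ⟨j+1, by omega⟩) ∧
        Cc (p ⟨j, by omega⟩) (p ⟨j+1, by omega⟩) w := by
      intro j hj
      have h9 := hp ⟨j, hj⟩
      simpa [Fin.castSucc, Fin.castAdd, Fin.castLE, Fin.succ] using h9
    have dom : ∀ (j : ℕ) (hj : j ≤ k) (i : ℕ) (hi : i ≤ j), ∀ n,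
        count (p ⟨j, by omega⟩) (w.take n) ≤ count (p ⟨i, by omega⟩) (w.take n) := by
      intro j
      induction j with
      | zero =>
          intro hj i hi n
          have : i = 0 := Nat.le_zero.mp hi
          subst this
          exact le_refl _
      | succ j ihj =>
          intro hj i hi n
          rcases Nat.eq_or_lt_of_le hi with he | hlt
          · subst he
            exact le_refl _
          · have hij : i ≤ j := by omega
            have hedge := hp' j (by omega)
            exact le_trans ((hedge.2 n).1) (ihj (by omega) i hij n)
    have domF : ∀ i j : Fin (k+1), i ≤ j → ∀ n,
        count (p j) (w.take n) ≤ count (p i) (w.take n) := by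
      intro i j hij n
      have h9 := dom j.1 (Nat.lt_succ_iff.mp j.2) i.1 hij n
      simpa using h9
    have strictF : ∀ i j : Fin (k+1), i < j →
        ∃ n, count (p j) (w.take n) < count (p i) (w.take n) := by
      intro i j hij
      have hik : i.1 < k := by
        have := hij
        rw [Fin.lt_def] at this
        have := j.2
        omega
      have hedge := hp' i.1 hik
      obtain ⟨n, hn⟩ := hstrict hedge.1.ne hedge.2
      have hle : (⟨i.1 + 1, by omega⟩ : Fin (k+1)) ≤ j := by
        rw [Fin.le_def]
        rw [Fin.lt_def] at hij
        exact hij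
      have hd := domF ⟨i.1 + 1, by omega⟩ j hle n
      refine ⟨n, lt_of_le_of_lt hd ?_⟩
      have : p (⟨i.1, by omega⟩ : Fin (k+1)) = p i := by
        congr 1
      rw [← this]
      exact hn
    have neF : ∀ i j : Fin (k+1), i < j → p i ≠ p j := by
      intro i j hij heq
      obtain ⟨n, hn⟩ := strictF i j hij
      rw [heq] at hn
      exact lt_irrefl _ hn
    have h0last : (0 : Fin (k+1)) < Fin.last k := by
      rw [Fin.lt_def]
      simpa using hk
    have hC0 : Cc (p 0) (p (Fin.last k)) w := by
      rcases hccAdj hAdj with hc | hc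
      · exact hc
      · exfalso
        obtain ⟨n, hn⟩ := strictF 0 (Fin.last k) h0last
        have h2 := (hc n).1
        omega
    intro i j hij
    have hdom := domF i j (le_of_lt hij)
    have hCij : Cc (p i) (p j) w := by
      intro n
      refine ⟨hdom n, ?_⟩
      have h1 := domF 0 i (Fin.zero_le i) n
      have h2 := (hC0 n).2
      have h3 := domF j (Fin.last k) (Fin.le_last j) n
      omega
    have hneij := neF i j hij
    exact ⟨(hrep _ _ hneij).mpr (cc_to_alternate hneij hCij), hCij⟩
  · -- source
    intro v hv
    refine ⟨hv, ?_⟩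
    rcases hccAdj hv with hc | hc
    · exact hc
    · exfalso
      have h1 := (hc 1).1
      rw [hw] at h1
      simp [count_cons, hv.ne', hv.ne] at h1
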